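/- Define the k-stuttering of a word w = σ_0...σ_{t−1} as σ_0^k σ_1^k ... σ_{t−1}^k. For regular languages L_0, ..., L_{k−1}, the set of k-stutterings of words in ⋂_i L_i equals (⧢_{i∈[k]} L_i) ∩ (⋃_{a∈Σ} {a^k})^*, where ⧢ denotes interleaving. -/

import Mathlib

/-- The `(i mod k)`-restriction of a word: letters at positions ≡ i (mod k). -/
def restrict {α : Type*} (k i : ℕ) (w : List α) : List α :=
  (((List.range w.length).zip w).filter fun p => p.1 % k = i).map Prod.snd

/-- The interleaving of `k` languages: words of length divisible by `k` whose
`(i mod k)`-restriction belongs to `L i` for every `i ∈ [k]`. -/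
def interleaving {α : Type*} (k : ℕ) (L : Fin k → Language α) : Set (List α) :=
  {w | w.length % k = 0 ∧ ∀ i : Fin k, restrict k i w ∈ L i}

/-- Kleene star of a set of words. -/
def star {α : Type*} (S : Set (List α)) : Set (List α) :=
  {w | ∃ l : List (List α), (∀ u ∈ l, u ∈ S) ∧ l.flatten = w}

/-- The `k`-stuttering of a word `σ₀…σ_{t-1}` is `σ₀^k σ₁^k … σ_{t-1}^k`. -/
def stutter {α : Type*} (k : ℕ) (w : List α) : List α :=
  (w.map (List.replicate k)).flatten

/-- Restriction starting from position `n`. -/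
def rfrom {α : Type*} (k i n : ℕ) (w : List α) : List α :=
  (((List.range' n w.length).zip w).filter fun p => p.1 % k = i).map Prod.snd

lemma rfrom_cons {α : Type*} (k i n : ℕ) (a : α) (w : List α) :
    rfrom k i n (a :: w) = (if n % k = i then [a] else []) ++ rfrom k i (n + 1) w := by
  simp only [rfrom, List.length_cons, List.range'_succ, List.zip_cons_cons, List.filter_cons]
  split <;> simp_all

lemma rfrom_congr {α : Type*} (k i : ℕ) (w : List α) :
    ∀ n m, n % k = m % k → rfrom k i n w = rfrom k i m w := by
  induction w with
  | nil => intros; rfl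
  | cons a w ih =>
    intro n m h
    rw [rfrom_cons, rfrom_cons, h, ih (n + 1) (m + 1) (by rw [Nat.add_mod, h, ← Nat.add_mod])]

lemma rfrom_append {α : Type*} (k i n : ℕ) (v w : List α) :
    rfrom k i n (v ++ w) = rfrom k i n v ++ rfrom k i (n + v.length) w := by
  simp only [rfrom, List.length_append]
  rw [← List.range'_append_1, List.zip_append (by simp)]
  simp [List.filter_append]

lemma rfrom_replicate {α : Type*} (k i : ℕ) (a : α) :
    ∀ m j, j + m ≤ k →
      rfrom k i j (List.replicate m a) = if j ≤ i ∧ i < j + m then [a] else [] := by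
  intro m
  induction m with
  | zero =>
    intro j h
    simp only [List.replicate_zero, rfrom, List.length_nil, List.range'_zero, List.zip_nil_left, List.filter_nil, List.map_nil]
    rw [if_neg (by omega)]
  | succ m ih =>
    intro j h
    rw [List.replicate_succ, rfrom_cons, ih (j + 1) (by omega),
      Nat.mod_eq_of_lt (by omega)]
    split_ifs <;> simp_all <;> omega

lemma restrict_eq_rfrom {α : Type*} (k i : ℕ) (w : List α) :
    restrict k i w = rfrom k i 0 w := by
  simp only [restrict, rfrom, List.range_eq_range']

lemma restrict_stutter {α : Type*} (k i : ℕ) (hk : 0 < k) (hi : i < k) (u : List α) :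
    restrict k i (stutter k u) = u := by
  rw [restrict_eq_rfrom]
  induction u with
  | nil => rfl
  | cons a u ihu =>
    have hst : stutter k (a :: u) = List.replicate k a ++ stutter k u := by
      simp [stutter]
    rw [hst, rfrom_append, rfrom_replicate k i a k 0 (by omega),
      if_pos ⟨Nat.zero_le _, by omega⟩,
      rfrom_congr k i (stutter k u) (0 + (List.replicate k a).length) 0
        (by simp [Nat.mod_self]), ihu]
    rfl

lemma stutter_length {α : Type*} (k : ℕ) (u : List α) :
    (stutter k u).length = u.length * k := by
  induction u with
  | nil => simp [stutter]
  | cons a u ih =>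
    have : stutter k (a :: u) = List.replicate k a ++ stutter k u := by simp [stutter]
    rw [this]
    simp [ih]
    ring

lemma exists_stutter {α : Type*} (k : ℕ) :
    ∀ l : List (List α), (∀ v ∈ l, ∃ a : α, v = List.replicate k a) →
      ∃ u : List α, stutter k u = l.flatten := by
  intro l
  induction l with
  | nil => exact fun _ => ⟨[], rfl⟩
  | cons v l ih =>
    intro h
    obtain ⟨a, ha⟩ := h v (by simp)
    obtain ⟨u, hu⟩ := ih fun v hv => h v (by simp [hv])
    refine ⟨a :: u, ?_⟩
    simp [stutter, ha]
    simpa [stutter] using hu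

/-- For regular languages `L₀, …, L_{k-1}`, the set of `k`-stutterings of words
in `⋂ᵢ Lᵢ` equals `(⧢_{i∈[k]} Lᵢ) ∩ (⋃_{a∈Σ} {a^k})^*`. -/
theorem stutter_image_inter {α : Type*} (k : ℕ) (hk : 0 < k)
    (L : Fin k → Language α) (hreg : ∀ i, (L i).IsRegular) :
    (stutter k) '' (⋂ i : Fin k, (L i : Set (List α))) =
      interleaving k L ∩ star {v | ∃ a : α, v = List.replicate k a} := by
  ext w
  constructor
  · rintro ⟨u, hu, rfl⟩
    refine ⟨⟨?_, fun i => ?_⟩, ?_⟩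
    · rw [stutter_length]; exact Nat.mul_mod_left _ _
    · rw [restrict_stutter k i hk i.2]
      exact Set.mem_iInter.1 hu i
    · exact ⟨u.map (List.replicate k), fun v hv => by
        obtain ⟨a, _, rfl⟩ := List.mem_map.1 hv; exact ⟨a, rfl⟩, rfl⟩
  · rintro ⟨⟨hlen, hmem⟩, l, hl, rfl⟩
    obtain ⟨u, hu⟩ := exists_stutter k l hl
    refine ⟨u, Set.mem_iInter.2 fun i => ?_, hu⟩
    rw [← restrict_stutter k i hk i.2 u, hu]
    exact hmem i
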